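/- Let I = {0,…,n}, J = {0,…,m} ⊂ ℕ, C > 0, and let a = (a_i)_{i∈I}, b = (b_j)_{j∈J} be increasing finite real sequences with C⁻¹ ≤ a_{i+1} − a_i ≤ C for all i and C⁻¹ ≤ b_{j+1} − b_j ≤ C for all j, and assume b_m − b_0 ≤ a_n − a_0. Then there exists a function f : J → I such that (i) |a_i − b_j| ≥ (1/2)|a_i − a_{f(j)}| for all i ∈ I, j ∈ J, and (ii) for every i ∈ I the number of j ∈ J with f(j) = i is at most 4C² + 2. -/

import Mathlib

open Set

private lemma count_lemma (T : Set ℕ) (hT : T.Finite) (D : ℝ) (hD : 0 ≤ D)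
    (h : ∀ j ∈ T, ∀ j' ∈ T, j ≤ j' → ((j' - j : ℕ) : ℝ) ≤ D) :
    (T.ncard : ℝ) ≤ D + 1 := by
  rcases T.eq_empty_or_nonempty with hE | hne
  · simp [hE]; linarith
  · have hj0 : sInf T ∈ T := Nat.sInf_mem hne
    have hsub : T ⊆ Set.Icc (sInf T) (sInf T + Nat.floor D) := by
      intro j hj
      constructor
      · exact Nat.sInf_le hj
      · have h1 := h _ hj0 _ hj (Nat.sInf_le hj)
        have h2 : j - sInf T ≤ Nat.floor D := Nat.le_floor h1
        omega
    have h3 : T.ncard ≤ (Set.Icc (sInf T) (sInf T + Nat.floor D)).ncard :=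
      Set.ncard_le_ncard hsub (Set.finite_Icc _ _)
    have h4 : (Set.Icc (sInf T) (sInf T + Nat.floor D)).ncard = Nat.floor D + 1 := by
      rw [← Finset.coe_Icc, Set.ncard_coe_finset, Nat.card_Icc]; omega
    have h5 : (Nat.floor D : ℝ) ≤ D := Nat.floor_le hD
    rw [h4] at h3
    calc (T.ncard : ℝ) ≤ ((Nat.floor D + 1 : ℕ) : ℝ) := Nat.cast_le.2 h3
    _ ≤ D + 1 := by push_cast; linarith

private lemma steps_lemma (C : ℝ) (x : ℕ → ℝ) (M : ℕ)
    (hx : ∀ k < M, C⁻¹ ≤ x (k + 1) - x k) :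
    ∀ d j, j + d ≤ M → (d : ℝ) * C⁻¹ ≤ x (j + d) - x j := by
  intro d
  induction d with
  | zero => intro j _; simp
  | succ d ih =>
    intro j h
    have h1 := ih j (by omega)
    have h2 := hx (j + d) (by omega)
    have h3 : j + (d + 1) = (j + d) + 1 := by omega
    rw [h3]
    push_cast
    linarith

private lemma aux_match (n m : ℕ) (C : ℝ) (hC : 0 < C) (hC1 : 1 ≤ C) (a b : ℕ → ℝ)
    (ha : ∀ i < n, C⁻¹ ≤ a (i + 1) - a i ∧ a (i + 1) - a i ≤ C)
    (hblb : ∀ j j', j ≤ j' → j' ≤ m → ((j' - j : ℕ) : ℝ) * C⁻¹ ≤ b j' - b j)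
    (c : ℕ → ℝ) (β : ℕ → ℕ) (hβ : ∀ j, β j < 3)
    (h1 : ∀ j ≤ m, a 0 ≤ c j ∧ c j ≤ a n)
    (h2 : ∀ i ≤ n, ∀ j ≤ m, |a i - c j| ≤ |a i - b j|)
    (h3 : ∀ j ≤ m, ∀ j' ≤ m, β j = β j' → |c j - c j'| = |b j - b j'|) :
    ∃ f : ℕ → ℕ, (∀ j ≤ m, f j ≤ n) ∧
      (∀ i ≤ n, ∀ j ≤ m, (1 / 2) * |a i - a (f j)| ≤ |a i - b j|) ∧
      (∀ i ≤ n, (({j | j ≤ m ∧ f j = i}).ncard : ℝ) ≤ 4 * C ^ 2 + 2) := by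
  classical
  have hex : ∀ j, ∃ i, i ≤ n ∧ ∀ i' ≤ n, |a i - c j| ≤ |a i' - c j| := by
    intro j
    obtain ⟨i, hi, hmin⟩ := Finset.exists_min_image (Finset.range (n + 1))
      (fun i => |a i - c j|) ⟨0, Finset.mem_range.2 (Nat.succ_pos n)⟩
    exact ⟨i, Nat.lt_succ_iff.1 (Finset.mem_range.1 hi),
      fun i' hi' => hmin i' (Finset.mem_range.2 (Nat.lt_succ_of_le hi'))⟩
  choose f hfn hmin using hex
  -- Voronoi bound : the nearest point is within C/2
  have key : ∀ j ≤ m, |c j - a (f j)| ≤ C / 2 := by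
    intro j hj
    obtain ⟨hc0, hcn⟩ := h1 j hj
    by_cases hn : a n ≤ c j
    · have hcj : c j = a n := le_antisymm hcn hn
      have h0 := hmin j n le_rfl
      rw [hcj] at h0 ⊢
      rw [abs_sub_comm]
      have : |a n - a n| = 0 := by simp
      rw [this] at h0
      linarith [abs_nonneg (a (f j) - a n), (by linarith : (0:ℝ) ≤ C / 2)]
    · push_neg at hn
      set P : ℕ → Prop := fun k => a k ≤ c j with hP
      have hP0 : P 0 := hc0
      have hkP : P (Nat.findGreatest P n) := Nat.findGreatest_spec (Nat.zero_le n) hP0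
      have hkn : Nat.findGreatest P n ≤ n := Nat.findGreatest_le n
      have hklt : Nat.findGreatest P n < n := by
        rcases lt_or_eq_of_le hkn with h | h
        · exact h
        · exfalso; rw [h] at hkP; exact absurd hkP (not_le.2 hn)
      have hk1 : ¬ P (Nat.findGreatest P n + 1) :=
        Nat.findGreatest_is_greatest (Nat.lt_succ_self _) (by omega)
      have hk1' : c j < a (Nat.findGreatest P n + 1) := not_le.1 hk1
      have g1 := hmin j (Nat.findGreatest P n) hkn
      have g2 := hmin j (Nat.findGreatest P n + 1) (by omega)
      have hgap := (ha (Nat.findGreatest P n) hklt).2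
      have e1 : |a (Nat.findGreatest P n) - c j| = c j - a (Nat.findGreatest P n) := by
        rw [abs_sub_comm]; exact abs_of_nonneg (by linarith [hkP])
      have e2 : |a (Nat.findGreatest P n + 1) - c j| = a (Nat.findGreatest P n + 1) - c j :=
        abs_of_nonneg (by linarith)
      rw [e1] at g1
      rw [e2] at g2
      rw [abs_sub_comm]
      linarith
  refine ⟨f, fun j _ => hfn j, ?_, ?_⟩
  · intro i hi j hj
    have t1 := h2 i hi j hj
    have t2 := hmin j i hi
    have t3 : |a i - a (f j)| ≤ |a i - c j| + |c j - a (f j)| := abs_sub_le _ _ _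
    have t4 : |c j - a (f j)| = |a (f j) - c j| := abs_sub_comm _ _
    linarith
  · intro i hi
    have hfin : ∀ r : ℕ, ({j | (j ≤ m ∧ f j = i) ∧ β j = r}).Finite :=
      fun r => (Set.finite_Iic m).subset (fun j hj => hj.1.1)
    have hcard : ∀ r : ℕ, (({j | (j ≤ m ∧ f j = i) ∧ β j = r}).ncard : ℝ) ≤ C ^ 2 + 1 := by
      intro r
      apply count_lemma _ (hfin r) _ (by positivity)
      intro j hj j' hj' hle
      obtain ⟨⟨hjm, hfj⟩, hβj⟩ := hj
      obtain ⟨⟨hjm', hfj'⟩, hβj'⟩ := hj'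
      have hcc : |c j - c j'| = |b j - b j'| := h3 j hjm j' hjm' (by rw [hβj, hβj'])
      have k1 := key j hjm
      have k2 := key j' hjm'
      rw [hfj] at k1
      rw [hfj'] at k2
      have hcd : |c j - c j'| ≤ C := by
        have u1 : |c j - c j'| ≤ |c j - a i| + |a i - c j'| := abs_sub_le _ _ _
        have u2 : |a i - c j'| = |c j' - a i| := abs_sub_comm _ _
        linarith
      have hbb : b j' - b j ≤ C := by
        have h5 : b j' - b j ≤ |b j - b j'| := by rw [abs_sub_comm]; exact le_abs_self _
        rw [← hcc] at h5
        linarith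
      have h6 := hblb j j' hle hjm'
      have h8 : ((j' - j : ℕ) : ℝ) * C⁻¹ ≤ C := le_trans h6 hbb
      calc ((j' - j : ℕ) : ℝ) = ((j' - j : ℕ) : ℝ) * C⁻¹ * C := by field_simp
      _ ≤ C * C := mul_le_mul_of_nonneg_right h8 hC.le
      _ = C ^ 2 := (sq C).symm
    have hsub : {j | j ≤ m ∧ f j = i} =
        {j | (j ≤ m ∧ f j = i) ∧ β j = 0} ∪
        ({j | (j ≤ m ∧ f j = i) ∧ β j = 1} ∪ {j | (j ≤ m ∧ f j = i) ∧ β j = 2}) := by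
      ext j
      have := hβ j
      simp only [Set.mem_setOf_eq, Set.mem_union]
      constructor
      · intro h
        rcases (by omega : β j = 0 ∨ β j = 1 ∨ β j = 2) with h0 | h0 | h0 <;> tauto
      · tauto
    rw [hsub]
    have u1 : ({j | (j ≤ m ∧ f j = i) ∧ β j = 0} ∪
        ({j | (j ≤ m ∧ f j = i) ∧ β j = 1} ∪ {j | (j ≤ m ∧ f j = i) ∧ β j = 2})).ncard ≤
        {j | (j ≤ m ∧ f j = i) ∧ β j = 0}.ncard +
        ({j | (j ≤ m ∧ f j = i) ∧ β j = 1}.ncard + {j | (j ≤ m ∧ f j = i) ∧ β j = 2}.ncard) :=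
      le_trans (Set.ncard_union_le _ _)
        (add_le_add le_rfl (Set.ncard_union_le _ _))
    calc (({j | (j ≤ m ∧ f j = i) ∧ β j = 0} ∪
        ({j | (j ≤ m ∧ f j = i) ∧ β j = 1} ∪ {j | (j ≤ m ∧ f j = i) ∧ β j = 2})).ncard : ℝ)
        ≤ (({j | (j ≤ m ∧ f j = i) ∧ β j = 0}.ncard +
        ({j | (j ≤ m ∧ f j = i) ∧ β j = 1}.ncard + {j | (j ≤ m ∧ f j = i) ∧ β j = 2}.ncard) : ℕ) : ℝ) :=
      Nat.cast_le.2 u1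
    _ ≤ 4 * C ^ 2 + 2 := by
      push_cast
      nlinarith [hcard 0, hcard 1, hcard 2, hC1, sq_nonneg (C - 1)]

/-- Matching lemma for two almost equidistant increasing finite sequences: if
`C⁻¹ ≤ a_{i+1} - a_i ≤ C`, `C⁻¹ ≤ b_{j+1} - b_j ≤ C` and `b_m - b_0 ≤ a_n - a_0`, then
there is `f : J → I` with `|a_i - b_j| ≥ ½|a_i - a_{f(j)}|` which is almost injective:
each fibre has at most `4C² + 2` elements. -/
theorem statement17 (n m : ℕ) (C : ℝ) (hC : 0 < C) (a b : ℕ → ℝ)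
    (ha : ∀ i < n, C⁻¹ ≤ a (i + 1) - a i ∧ a (i + 1) - a i ≤ C)
    (hb : ∀ j < m, C⁻¹ ≤ b (j + 1) - b j ∧ b (j + 1) - b j ≤ C)
    (hw : b m - b 0 ≤ a n - a 0) :
    ∃ f : ℕ → ℕ, (∀ j ≤ m, f j ≤ n) ∧
      (∀ i ≤ n, ∀ j ≤ m, (1 / 2) * |a i - a (f j)| ≤ |a i - b j|) ∧
      (∀ i ≤ n, (({j | j ≤ m ∧ f j = i}).ncard : ℝ) ≤ 4 * C ^ 2 + 2) := by
  have hblb : ∀ j j', j ≤ j' → j' ≤ m → ((j' - j : ℕ) : ℝ) * C⁻¹ ≤ b j' - b j := by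
    intro j j' hle hm'
    have := steps_lemma C b m (fun k hk => (hb k hk).1) (j' - j) j (by omega)
    rwa [show j + (j' - j) = j' by omega] at this
  have bmono : ∀ j j', j ≤ j' → j' ≤ m → b j ≤ b j' := by
    intro j j' hle hm'
    have h1 := hblb j j' hle hm'
    have h2 : (0:ℝ) ≤ ((j' - j : ℕ) : ℝ) * C⁻¹ := by positivity
    linarith
  by_cases hn0 : n = 0
  · subst hn0
    have hm0 : m = 0 := by
      by_contra hm
      have h1 := hblb 0 m (Nat.zero_le m) le_rfl
      have h2 : (1:ℝ) ≤ ((m - 0 : ℕ) : ℝ) := by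
        have : 1 ≤ m := by omega
        exact_mod_cast (by omega : 1 ≤ m - 0)
      have h3 : (0:ℝ) < C⁻¹ := by positivity
      nlinarith
    subst hm0
    refine ⟨fun _ => 0, fun j _ => le_rfl, ?_, ?_⟩
    · intro i hi j hj
      have hi0 : i = 0 := Nat.le_zero.1 hi
      subst hi0
      simp
    · intro i hi
      have hi0 : i = 0 := Nat.le_zero.1 hi
      subst hi0
      have hset : {j | j ≤ 0 ∧ (fun _ => 0 : ℕ → ℕ) j = 0} = {0} := by
        ext j; simp [Nat.le_zero]
      rw [hset, Set.ncard_singleton]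
      have hsq : (0:ℝ) ≤ C ^ 2 := sq_nonneg C
      push_cast
      linarith
  · have hn1 : 1 ≤ n := by omega
    have h01 := ha 0 (by omega)
    have hinv : C⁻¹ ≤ C := le_trans h01.1 h01.2
    have hCC : 1 ≤ C * C := by
      have := mul_le_mul_of_nonneg_left hinv hC.le
      rwa [mul_inv_cancel₀ hC.ne'] at this
    have hC1 : 1 ≤ C := by nlinarith
    have amono : ∀ i i', i ≤ i' → i' ≤ n → a i ≤ a i' := by
      intro i i' hle hn'
      have h1 := steps_lemma C a n (fun k hk => (ha k hk).1) (i' - i) i (by omega)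
      rw [show i + (i' - i) = i' by omega] at h1
      have h2 : (0:ℝ) ≤ ((i' - i : ℕ) : ℝ) * C⁻¹ := by positivity
      linarith
    have ha0n : a 0 ≤ a n := amono 0 n (Nat.zero_le n) le_rfl
    have hb0m : b 0 ≤ b m := bmono 0 m (Nat.zero_le m) le_rfl
    by_cases hL : b m < a 0
    · -- all b's to the left of a
      apply aux_match n m C hC hC1 a b ha hblb (fun j => a 0 + (b m - b j)) (fun _ => 0)
        (fun _ => Nat.zero_lt_succ 2)
      · intro j hj
        have h1 := bmono j m hj le_rfl
        have h2 := bmono 0 j (Nat.zero_le j) hj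
        constructor <;> linarith
      · intro i hi j hj
        have hbj : b j ≤ b m := bmono j m hj le_rfl
        have hai : a 0 ≤ a i := amono 0 i (Nat.zero_le i) hi
        have habs : |a i - b j| = a i - b j := abs_of_nonneg (by linarith)
        rw [habs, abs_le]
        constructor <;> linarith
      · intro j hj j' hj' _
        rw [show (a 0 + (b m - b j)) - (a 0 + (b m - b j')) = -(b j - b j') by ring, abs_neg]
    · by_cases hR : a n < b 0
      · -- all b's to the right of a
        apply aux_match n m C hC hC1 a b ha hblb (fun j => a n - (b j - b 0)) (fun _ => 0)
          (fun _ => Nat.zero_lt_succ 2)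
        · intro j hj
          have h1 := bmono j m hj le_rfl
          have h2 := bmono 0 j (Nat.zero_le j) hj
          constructor <;> linarith
        · intro i hi j hj
          have hbj : b 0 ≤ b j := bmono 0 j (Nat.zero_le j) hj
          have hai : a i ≤ a n := amono i n hi le_rfl
          have habs : |a i - b j| = b j - a i := by
            rw [abs_sub_comm]; exact abs_of_nonneg (by linarith)
          rw [habs, abs_le]
          constructor <;> linarith
        · intro j hj j' hj' _
          rw [show (a n - (b j - b 0)) - (a n - (b j' - b 0)) = -(b j - b j') by ring, abs_neg]
      · -- the windows overlap
        push_neg at hL hR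
        apply aux_match n m C hC hC1 a b ha hblb
          (fun j => if b j < a 0 then 2 * a 0 - b j else if a n < b j then 2 * a n - b j else b j)
          (fun j => if b j < a 0 then 0 else if a n < b j then 2 else 1)
          (fun j => by
            show (if b j < a 0 then 0 else if a n < b j then 2 else 1) < 3
            split_ifs <;> omega)
        · intro j hj
          have h1 := bmono j m hj le_rfl
          have h2 := bmono 0 j (Nat.zero_le j) hj
          split_ifs with hb1 hb2
          · constructor <;> linarith
          · constructor <;> linarith
          · push_neg at hb1 hb2
            constructor <;> linarith
        · intro i hi j hj
          have hai0 : a 0 ≤ a i := amono 0 i (Nat.zero_le i) hi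
          have hain : a i ≤ a n := amono i n hi le_rfl
          split_ifs with hb1 hb2
          · have habs : |a i - b j| = a i - b j := abs_of_nonneg (by linarith)
            rw [habs, abs_le]
            constructor <;> linarith
          · have habs : |a i - b j| = b j - a i := by
              rw [abs_sub_comm]; exact abs_of_nonneg (by linarith)
            rw [habs, abs_le]
            constructor <;> linarith
          · exact le_refl _
        · intro j hj j' hj' hββ
          split_ifs at hββ ⊢ <;> try omega
          all_goals
            first
              | rfl
              | (rw [abs_sub_comm (b j) (b j')]; congr 1; ring)
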